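/- There exists a constant c > 0, independent of η, such that for all η > 0 and t > 0, the quantity |I_a + I_b| ≤ c(1/η + 2)² e^{4ηt}, where I_a = ∫_{ξ<0} e^{2πixξ} ∂_ξ² Ŵ(t,ξ) dξ and I_b is the analogous integral over ξ > 0, with Ŵ(t,ξ) = e^{iξ³t − ηt(|ξ|³−|ξ|)}. In particular ‖∂_ξ² Ŵ(t,·)‖_{L¹((−∞,0))} ≤ c(1/η+2)² e^{4ηt}. -/

import Mathlib

open MeasureTheory

noncomputable def ostSymbol (η t ξ : ℝ) : ℂ :=
  Complex.exp (Complex.I * ((ξ ^ 3 * t : ℝ) : ℂ) - ((η * t * (|ξ| ^ 3 - |ξ|) : ℝ) : ℂ))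

noncomputable def ostKernel (η t x : ℝ) : ℂ :=
  ∫ ξ : ℝ, Complex.exp (2 * Real.pi * Complex.I * ((x * ξ : ℝ) : ℂ)) * ostSymbol η t ξ

open Real Set


noncomputable def cub (c₃ c₁ : ℂ) (ξ : ℝ) : ℂ := Complex.exp (c₃ * (ξ:ℂ)^3 + c₁ * (ξ:ℂ))

lemma cub_hasDerivAt (c₃ c₁ : ℂ) (ξ : ℝ) :
    HasDerivAt (cub c₃ c₁) ((3 * c₃ * (ξ:ℂ)^2 + c₁) * cub c₃ c₁ ξ) ξ := by
  have hC : HasDerivAt (fun z : ℂ => Complex.exp (c₃ * z^3 + c₁ * z))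
      ((3 * c₃ * (ξ:ℂ)^2 + c₁) * Complex.exp (c₃ * (ξ:ℂ)^3 + c₁ * (ξ:ℂ))) (ξ:ℂ) := by
    have hq : HasDerivAt (fun z : ℂ => c₃ * z^3 + c₁ * z) (3 * c₃ * (ξ:ℂ)^2 + c₁) (ξ:ℂ) := by
      have h3 : HasDerivAt (fun z : ℂ => z^3) (3 * (ξ:ℂ)^2) (ξ:ℂ) := by
        simpa using hasDerivAt_pow 3 (ξ:ℂ)
      have h1 : HasDerivAt (fun z : ℂ => z) 1 (ξ:ℂ) := hasDerivAt_id _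
      have := (h3.const_mul c₃).add (h1.const_mul c₁)
      exact this.congr_deriv (by ring)
    simpa [mul_comm] using hq.cexp
  exact hC.comp_ofReal

lemma cub_iteratedDeriv_two (c₃ c₁ : ℂ) (ξ : ℝ) :
    iteratedDeriv 2 (cub c₃ c₁) ξ =
      ((3 * c₃ * (ξ:ℂ)^2 + c₁)^2 + 6 * c₃ * (ξ:ℂ)) * cub c₃ c₁ ξ := by
  have hd : deriv (cub c₃ c₁) = fun ξ : ℝ => (3 * c₃ * (ξ:ℂ)^2 + c₁) * cub c₃ c₁ ξ :=
    funext fun ξ => (cub_hasDerivAt c₃ c₁ ξ).deriv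
  have hg : HasDerivAt (fun ξ : ℝ => 3 * c₃ * (ξ:ℂ)^2 + c₁) (6 * c₃ * (ξ:ℂ)) ξ := by
    have hC : HasDerivAt (fun z : ℂ => 3 * c₃ * z^2 + c₁) (6 * c₃ * (ξ:ℂ)) (ξ:ℂ) := by
      have h2 : HasDerivAt (fun z : ℂ => z^2) (2 * (ξ:ℂ)) (ξ:ℂ) := by
        simpa using hasDerivAt_pow 2 (ξ:ℂ)
      have := (h2.const_mul (3 * c₃)).add_const c₁
      exact this.congr_deriv (by ring)
    exact hC.comp_ofReal
  have h := hg.mul (cub_hasDerivAt c₃ c₁ ξ)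
  rw [iteratedDeriv_succ, iteratedDeriv_one, hd]
  exact h.deriv.trans (by ring)
lemma cube_ineq (r : ℝ) (hr : 0 ≤ r) : r ≤ 1 + r^3/2 := by
  nlinarith [mul_nonneg hr (sq_nonneg (r-1)), sq_nonneg (r - 3/4)]

noncomputable def Gb (η t ξ : ℝ) : ℝ :=
  ((3*t*(1+η)*ξ^2 + η*t)^2 + 6*t*(1+η)*|ξ|) * (Real.exp (η*t) * Real.exp (-(η*t/2)*|ξ|^3))

lemma cub_norm_bound (c₃ c₁ : ℂ) (M b : ℝ) (hM : ‖c₃‖ ≤ M) (hb : ‖c₁‖ ≤ b) (ξ : ℝ) :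
    ‖((3*c₃*(ξ:ℂ)^2 + c₁)^2 + 6*c₃*(ξ:ℂ)) * cub c₃ c₁ ξ‖ ≤
      ((3*M*ξ^2 + b)^2 + 6*M*|ξ|) * Real.exp ((c₃*(ξ:ℂ)^3 + c₁*(ξ:ℂ)).re) := by
  rw [norm_mul]
  have hcub : ‖cub c₃ c₁ ξ‖ = Real.exp ((c₃*(ξ:ℂ)^3 + c₁*(ξ:ℂ)).re) := by
    rw [cub, Complex.norm_exp]
  rw [hcub]
  have hM0 : 0 ≤ M := (norm_nonneg _).trans hM
  have hb0 : 0 ≤ b := (norm_nonneg _).trans hb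
  have h1 : ‖3*c₃*(ξ:ℂ)^2 + c₁‖ ≤ 3*M*ξ^2 + b := by
    calc ‖3*c₃*(ξ:ℂ)^2 + c₁‖ ≤ ‖3*c₃*(ξ:ℂ)^2‖ + ‖c₁‖ := norm_add_le _ _
    _ ≤ 3*M*ξ^2 + b := by
        rw [norm_mul, norm_mul, norm_pow, Complex.norm_real]
        simp only [Complex.norm_ofNat]
        rw [Real.norm_eq_abs, sq_abs]
        have hξ2 : (0:ℝ) ≤ ξ^2 := sq_nonneg ξ
        nlinarith [norm_nonneg c₃]
  have h2 : ‖6*c₃*(ξ:ℂ)‖ ≤ 6*M*|ξ| := by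
    rw [norm_mul, norm_mul, Complex.norm_real]
    simp only [Complex.norm_ofNat, Real.norm_eq_abs]
    nlinarith [abs_nonneg ξ, norm_nonneg c₃]
  have h3 : ‖(3*c₃*(ξ:ℂ)^2 + c₁)^2 + 6*c₃*(ξ:ℂ)‖ ≤ (3*M*ξ^2 + b)^2 + 6*M*|ξ| := by
    calc ‖(3*c₃*(ξ:ℂ)^2 + c₁)^2 + 6*c₃*(ξ:ℂ)‖
        ≤ ‖(3*c₃*(ξ:ℂ)^2 + c₁)^2‖ + ‖6*c₃*(ξ:ℂ)‖ := norm_add_le _ _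
      _ = ‖3*c₃*(ξ:ℂ)^2 + c₁‖^2 + ‖6*c₃*(ξ:ℂ)‖ := by rw [norm_pow]
      _ ≤ (3*M*ξ^2 + b)^2 + 6*M*|ξ| := by
          have := pow_le_pow_left₀ (norm_nonneg _) h1 2
          linarith
  exact mul_le_mul_of_nonneg_right h3 (Real.exp_nonneg _)

lemma ostSymbol_eq_Iio (η t : ℝ) {ξ : ℝ} (hξ : ξ < 0) :
    ostSymbol η t ξ = cub (((η*t : ℝ):ℂ) + Complex.I*((t:ℝ):ℂ)) (-((η*t:ℝ):ℂ)) ξ := by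
  rw [ostSymbol, cub]
  congr 1
  rw [abs_of_neg hξ]
  push_cast
  ring

lemma ostSymbol_eq_Ioi (η t : ℝ) {ξ : ℝ} (hξ : 0 < ξ) :
    ostSymbol η t ξ = cub (-((η*t : ℝ):ℂ) + Complex.I*((t:ℝ):ℂ)) (((η*t:ℝ):ℂ)) ξ := by
  rw [ostSymbol, cub]
  congr 1
  rw [abs_of_pos hξ]
  push_cast
  ring
lemma norm_c₃ (η t : ℝ) (hη : 0 < η) (ht : 0 < t) :
    ‖(((η*t : ℝ):ℂ) + Complex.I*((t:ℝ):ℂ))‖ ≤ t*(1+η) := by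
  calc ‖(((η*t : ℝ):ℂ) + Complex.I*((t:ℝ):ℂ))‖ ≤ ‖((η*t : ℝ):ℂ)‖ + ‖Complex.I*((t:ℝ):ℂ)‖ :=
        norm_add_le _ _
  _ ≤ t*(1+η) := by
      rw [norm_mul, Complex.norm_I, Complex.norm_real, Complex.norm_real, one_mul,
        Real.norm_eq_abs, Real.norm_eq_abs, abs_of_pos (mul_pos hη ht), abs_of_pos ht]
      nlinarith

lemma norm_c₃' (η t : ℝ) (hη : 0 < η) (ht : 0 < t) :
    ‖(-((η*t : ℝ):ℂ) + Complex.I*((t:ℝ):ℂ))‖ ≤ t*(1+η) := by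
  calc ‖(-((η*t : ℝ):ℂ) + Complex.I*((t:ℝ):ℂ))‖ ≤ ‖-((η*t : ℝ):ℂ)‖ + ‖Complex.I*((t:ℝ):ℂ)‖ :=
        norm_add_le _ _
  _ ≤ t*(1+η) := by
      rw [norm_neg, norm_mul, Complex.norm_I, Complex.norm_real, Complex.norm_real, one_mul,
        Real.norm_eq_abs, Real.norm_eq_abs, abs_of_pos (mul_pos hη ht), abs_of_pos ht]
      nlinarith

lemma pointwise_Iio (η t : ℝ) (hη : 0 < η) (ht : 0 < t) {ξ : ℝ} (hξ : ξ < 0) :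
    ‖iteratedDeriv 2 (fun ξ : ℝ => ostSymbol η t ξ) ξ‖ ≤ Gb η t ξ := by
  have hs : 0 < η * t := mul_pos hη ht
  set c₃ : ℂ := ((η*t : ℝ):ℂ) + Complex.I*((t:ℝ):ℂ) with hc₃
  set c₁ : ℂ := -((η*t:ℝ):ℂ) with hc₁
  have heq : iteratedDeriv 2 (fun ξ : ℝ => ostSymbol η t ξ) ξ = iteratedDeriv 2 (cub c₃ c₁) ξ := by
    refine Filter.EventuallyEq.iteratedDeriv_eq 2 ?_
    filter_upwards [Iio_mem_nhds hξ] with x hx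
    exact ostSymbol_eq_Iio η t hx
  rw [heq, cub_iteratedDeriv_two]
  refine le_trans (cub_norm_bound c₃ c₁ (t*(1+η)) (η*t) (norm_c₃ η t hη ht)
    (by rw [hc₁, norm_neg, Complex.norm_real, Real.norm_eq_abs, abs_of_pos hs]) ξ) ?_
  rw [Gb]
  have hre : (c₃*(ξ:ℂ)^3 + c₁*(ξ:ℂ)).re = η*t*ξ^3 - η*t*ξ := by
    rw [hc₃, hc₁]
    simp [Complex.add_re, Complex.mul_re, ← Complex.ofReal_pow, Complex.ofReal_re, Complex.ofReal_im,
      Complex.I_re, Complex.I_im]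
    try ring
  rw [hre]
  have hP : (3*(t*(1+η))*ξ^2 + η*t)^2 + 6*(t*(1+η))*|ξ| =
      (3*t*(1+η)*ξ^2 + η*t)^2 + 6*t*(1+η)*|ξ| := by ring
  rw [hP]
  have hexp : Real.exp (η*t*ξ^3 - η*t*ξ) ≤ Real.exp (η*t) * Real.exp (-(η*t/2)*|ξ|^3) := by
    rw [← Real.exp_add, Real.exp_le_exp, abs_of_neg hξ]
    nlinarith [cube_ineq (-ξ) (by linarith), mul_pos hη ht]
  have hPnn : 0 ≤ (3*t*(1+η)*ξ^2 + η*t)^2 + 6*t*(1+η)*|ξ| := by positivity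
  exact mul_le_mul_of_nonneg_left hexp hPnn

lemma pointwise_Ioi (η t : ℝ) (hη : 0 < η) (ht : 0 < t) {ξ : ℝ} (hξ : 0 < ξ) :
    ‖iteratedDeriv 2 (fun ξ : ℝ => ostSymbol η t ξ) ξ‖ ≤ Gb η t ξ := by
  have hs : 0 < η * t := mul_pos hη ht
  set c₃ : ℂ := -((η*t : ℝ):ℂ) + Complex.I*((t:ℝ):ℂ) with hc₃
  set c₁ : ℂ := ((η*t:ℝ):ℂ) with hc₁
  have heq : iteratedDeriv 2 (fun ξ : ℝ => ostSymbol η t ξ) ξ = iteratedDeriv 2 (cub c₃ c₁) ξ := by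
    refine Filter.EventuallyEq.iteratedDeriv_eq 2 ?_
    filter_upwards [Ioi_mem_nhds hξ] with x hx
    exact ostSymbol_eq_Ioi η t hx
  rw [heq, cub_iteratedDeriv_two]
  refine le_trans (cub_norm_bound c₃ c₁ (t*(1+η)) (η*t) (norm_c₃' η t hη ht)
    (by rw [hc₁, Complex.norm_real, Real.norm_eq_abs, abs_of_pos hs]) ξ) ?_
  rw [Gb]
  have hre : (c₃*(ξ:ℂ)^3 + c₁*(ξ:ℂ)).re = -(η*t*ξ^3) + η*t*ξ := by
    rw [hc₃, hc₁]
    simp [Complex.add_re, Complex.mul_re, ← Complex.ofReal_pow, Complex.ofReal_re, Complex.ofReal_im,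
      Complex.I_re, Complex.I_im]
    try ring
  rw [hre]
  have hP : (3*(t*(1+η))*ξ^2 + η*t)^2 + 6*(t*(1+η))*|ξ| =
      (3*t*(1+η)*ξ^2 + η*t)^2 + 6*t*(1+η)*|ξ| := by ring
  rw [hP]
  have hexp : Real.exp (-(η*t*ξ^3) + η*t*ξ) ≤ Real.exp (η*t) * Real.exp (-(η*t/2)*|ξ|^3) := by
    rw [← Real.exp_add, Real.exp_le_exp, abs_of_pos hξ]
    nlinarith [cube_ineq ξ (by linarith), mul_pos hη ht]
  have hPnn : 0 ≤ (3*t*(1+η)*ξ^2 + η*t)^2 + 6*t*(1+η)*|ξ| := by positivity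
  exact mul_le_mul_of_nonneg_left hexp hPnn


lemma half_rpow {s : ℝ} (hs : 0 < s) {q : ℝ} (hq2 : -2 ≤ q) (hq0 : q ≤ 0) :
    (s/2)^q ≤ 4 * s^q := by
  rw [Real.div_rpow hs.le (by norm_num : (0:ℝ) ≤ 2), div_eq_mul_inv,
    ← Real.rpow_neg (by norm_num : (0:ℝ) ≤ 2)]
  have h24 : (2:ℝ)^(-q) ≤ 4 := by
    calc (2:ℝ)^(-q) ≤ (2:ℝ)^(2:ℝ) :=
          Real.rpow_le_rpow_of_exponent_le one_le_two (by linarith)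
    _ = 4 := by rw [Real.rpow_two]; norm_num
  have hs' : (0:ℝ) < s^q := Real.rpow_pos_of_pos hs q
  nlinarith

lemma rpow_le_exp3 {s p : ℝ} (hs : 0 < s) (hp0 : 0 ≤ p) (hp : p ≤ 2) :
    s^p ≤ Real.exp (3*s) := by
  rcases le_total s 1 with h1 | h1
  · calc s^p ≤ 1 := Real.rpow_le_one hs.le h1 hp0
    _ ≤ Real.exp (3*s) := Real.one_le_exp (by linarith)
  · calc s^p ≤ s^(2:ℝ) := Real.rpow_le_rpow_of_exponent_le h1 hp
    _ ≤ Real.exp (3*s) := by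
        rw [Real.rpow_two]
        have h := Real.add_one_le_exp s
        have h2 : Real.exp s * Real.exp s ≤ Real.exp (3*s) := by
          rw [← Real.exp_add]; exact Real.exp_le_exp.2 (by linarith)
        nlinarith [Real.exp_pos s]

lemma inv_eta_sq {η : ℝ} (hη : 0 < η) : ((1+η)/η) = 1/η + 1 := by field_simp

lemma eta_ineq1 {η : ℝ} (hη : 0 < η) : 1/η + 1 ≤ (1/η + 2)^2 := by
  have : 0 < 1/η := by positivity
  nlinarith

lemma eta_ineq2 {η : ℝ} (hη : 0 < η) : (1:ℝ) ≤ (1/η + 2)^2 := by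
  have : 0 < 1/η := by positivity
  nlinarith

lemma term4 {η t : ℝ} (hη : 0 < η) (ht : 0 < t) :
    Real.exp (η*t) * (3*t*(1+η))^2 * ((η*t/2) ^ (-(5:ℝ)/3) * (1/3) * Real.Gamma (5/3)) ≤
      12*Real.Gamma (5/3) * (1/η+2)^2 * Real.exp (4*(η*t)) := by
  set s := η*t with hsdef
  have hs : 0 < s := mul_pos hη ht
  have hΓ : 0 < Real.Gamma (5/3) := Real.Gamma_pos_of_pos (by norm_num)
  have htt : t = s/η := by rw [hsdef]; field_simp
  rw [htt]
  have hss : s^2 * s^(-(5:ℝ)/3) = s^((1:ℝ)/3) := by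
    rw [← Real.rpow_two, ← Real.rpow_add hs]; norm_num
  calc Real.exp s * (3*(s/η)*(1+η))^2 * ((s/2) ^ (-(5:ℝ)/3) * (1/3) * Real.Gamma (5/3))
      = (Real.Gamma (5/3) * 3 * ((1+η)/η)^2) * (s^2 * (s/2)^(-(5:ℝ)/3)) * Real.exp s := by
        ring
    _ ≤ (Real.Gamma (5/3) * 3 * ((1+η)/η)^2) * (s^2 * (4 * s^(-(5:ℝ)/3))) * Real.exp s := by
        gcongr
        exact half_rpow hs (by norm_num) (by norm_num)
    _ = (12*Real.Gamma (5/3)) * ((1+η)/η)^2 * (s^2 * s^(-(5:ℝ)/3)) * Real.exp s := by ring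
    _ = (12*Real.Gamma (5/3)) * ((1+η)/η)^2 * s^((1:ℝ)/3) * Real.exp s := by rw [hss]
    _ ≤ (12*Real.Gamma (5/3)) * (1/η+2)^2 * Real.exp (3*s) * Real.exp s := by
        gcongr
        · rw [inv_eta_sq hη]
          have h1 : (0:ℝ) ≤ 1/η + 1 := by positivity
          have h2 : 1/η + 1 ≤ 1/η + 2 := by linarith
          nlinarith
        · exact rpow_le_exp3 hs (by norm_num) (by norm_num)
    _ = 12*Real.Gamma (5/3) * (1/η+2)^2 * Real.exp (4*s) := by
        rw [show (4:ℝ)*s = 3*s + s by ring, Real.exp_add]; ring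

lemma term2 {η t : ℝ} (hη : 0 < η) (ht : 0 < t) :
    Real.exp (η*t) * (2*(3*t*(1+η))*(η*t)) * ((η*t/2) ^ (-(1:ℝ)) * (1/3) * Real.Gamma 1) ≤
      8*Real.Gamma 1 * (1/η+2)^2 * Real.exp (4*(η*t)) := by
  set s := η*t with hsdef
  have hs : 0 < s := mul_pos hη ht
  have hΓ : 0 < Real.Gamma 1 := Real.Gamma_pos_of_pos (by norm_num)
  have htt : t = s/η := by rw [hsdef]; field_simp
  rw [htt]
  have hss : s * s^(-(1:ℝ)) = 1 := by
    rw [Real.rpow_neg_one, mul_inv_cancel₀ hs.ne']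
  calc Real.exp s * (2*(3*(s/η)*(1+η))*s) * ((s/2) ^ (-(1:ℝ)) * (1/3) * Real.Gamma 1)
      = (Real.Gamma 1 * 2 * ((1+η)/η) * s) * (s * (s/2)^(-(1:ℝ))) * Real.exp s := by ring
    _ ≤ (Real.Gamma 1 * 2 * ((1+η)/η) * s) * (s * (4 * s^(-(1:ℝ)))) * Real.exp s := by
        have hb : (0:ℝ) ≤ Real.Gamma 1 * 2 * ((1+η)/η) * s := by positivity
        gcongr
        exact half_rpow hs (by norm_num) (by norm_num)
    _ = (8*Real.Gamma 1) * ((1+η)/η) * s * (s * s^(-(1:ℝ))) * Real.exp s := by ring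
    _ = (8*Real.Gamma 1) * ((1+η)/η) * s * Real.exp s := by rw [hss]; ring
    _ ≤ (8*Real.Gamma 1) * (1/η+2)^2 * Real.exp (3*s) * Real.exp s := by
        gcongr
        · rw [inv_eta_sq hη]; exact eta_ineq1 hη
        · calc s = s^(1:ℝ) := (Real.rpow_one s).symm
            _ ≤ Real.exp (3*s) := rpow_le_exp3 hs (by norm_num) (by norm_num)
    _ = 8*Real.Gamma 1 * (1/η+2)^2 * Real.exp (4*s) := by
        rw [show (4:ℝ)*s = 3*s + s by ring, Real.exp_add]; ring

lemma term0 {η t : ℝ} (hη : 0 < η) (ht : 0 < t) :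
    Real.exp (η*t) * (η*t)^2 * ((η*t/2) ^ (-(1:ℝ)/3) * (1/3) * Real.Gamma (1/3)) ≤
      (4/3)*Real.Gamma (1/3) * (1/η+2)^2 * Real.exp (4*(η*t)) := by
  set s := η*t with hsdef
  have hs : 0 < s := mul_pos hη ht
  have hΓ : 0 < Real.Gamma (1/3) := Real.Gamma_pos_of_pos (by norm_num)
  have hss : s^2 * s^(-(1:ℝ)/3) = s^((5:ℝ)/3) := by
    rw [← Real.rpow_two, ← Real.rpow_add hs]; norm_num
  calc Real.exp s * s^2 * ((s/2) ^ (-(1:ℝ)/3) * (1/3) * Real.Gamma (1/3))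
      = (Real.Gamma (1/3) * (1/3)) * (s^2 * (s/2)^(-(1:ℝ)/3)) * Real.exp s := by ring
    _ ≤ (Real.Gamma (1/3) * (1/3)) * (s^2 * (4 * s^(-(1:ℝ)/3))) * Real.exp s := by
        gcongr
        exact half_rpow hs (by norm_num) (by norm_num)
    _ = ((4/3)*Real.Gamma (1/3)) * (s^2 * s^(-(1:ℝ)/3)) * Real.exp s := by ring
    _ = ((4/3)*Real.Gamma (1/3)) * s^((5:ℝ)/3) * Real.exp s := by rw [hss]
    _ ≤ ((4/3)*Real.Gamma (1/3)) * ((1/η+2)^2 * Real.exp (3*s)) * Real.exp s := by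
        have h1 : s^((5:ℝ)/3) ≤ Real.exp (3*s) := rpow_le_exp3 hs (by norm_num) (by norm_num)
        have h2 : Real.exp (3*s) ≤ (1/η+2)^2 * Real.exp (3*s) := by
          nlinarith [eta_ineq2 hη, Real.exp_pos (3*s)]
        have := h1.trans h2
        gcongr
    _ = (4/3)*Real.Gamma (1/3) * (1/η+2)^2 * Real.exp (4*s) := by
        rw [show (4:ℝ)*s = 3*s + s by ring, Real.exp_add]; ring

lemma term1 {η t : ℝ} (hη : 0 < η) (ht : 0 < t) :
    Real.exp (η*t) * (6*t*(1+η)) * ((η*t/2) ^ (-(2:ℝ)/3) * (1/3) * Real.Gamma (2/3)) ≤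
      8*Real.Gamma (2/3) * (1/η+2)^2 * Real.exp (4*(η*t)) := by
  set s := η*t with hsdef
  have hs : 0 < s := mul_pos hη ht
  have hΓ : 0 < Real.Gamma (2/3) := Real.Gamma_pos_of_pos (by norm_num)
  have htt : t = s/η := by rw [hsdef]; field_simp
  rw [htt]
  have hss : s * s^(-(2:ℝ)/3) = s^((1:ℝ)/3) := by
    nth_rewrite 1 [← Real.rpow_one s]
    rw [← Real.rpow_add hs]; norm_num
  calc Real.exp s * (6*(s/η)*(1+η)) * ((s/2) ^ (-(2:ℝ)/3) * (1/3) * Real.Gamma (2/3))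
      = (Real.Gamma (2/3) * 2 * ((1+η)/η)) * (s * (s/2)^(-(2:ℝ)/3)) * Real.exp s := by ring
    _ ≤ (Real.Gamma (2/3) * 2 * ((1+η)/η)) * (s * (4 * s^(-(2:ℝ)/3))) * Real.exp s := by
        gcongr
        exact half_rpow hs (by norm_num) (by norm_num)
    _ = (8*Real.Gamma (2/3)) * ((1+η)/η) * (s * s^(-(2:ℝ)/3)) * Real.exp s := by ring
    _ = (8*Real.Gamma (2/3)) * ((1+η)/η) * s^((1:ℝ)/3) * Real.exp s := by rw [hss]
    _ ≤ (8*Real.Gamma (2/3)) * (1/η+2)^2 * Real.exp (3*s) * Real.exp s := by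
        gcongr
        · rw [inv_eta_sq hη]; exact eta_ineq1 hη
        · exact rpow_le_exp3 hs (by norm_num) (by norm_num)
    _ = 8*Real.Gamma (2/3) * (1/η+2)^2 * Real.exp (4*s) := by
        rw [show (4:ℝ)*s = 3*s + s by ring, Real.exp_add]; ring

lemma moment_int (m : ℕ) {b : ℝ} (hb : 0 < b) :
    IntegrableOn (fun x : ℝ => x^m * Real.exp (-b * x^3)) (Set.Ioi 0) := by
  have h := integrableOn_rpow_mul_exp_neg_mul_rpow (s := (m:ℝ)) (p := 3)
    (lt_of_lt_of_le neg_one_lt_zero (Nat.cast_nonneg m)) (by norm_num) hb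
  refine h.congr_fun (fun x hx => ?_) measurableSet_Ioi
  beta_reduce
  rw [Real.rpow_natCast, show (3:ℝ) = ((3:ℕ):ℝ) by norm_num, Real.rpow_natCast]

lemma moment_val (m : ℕ) {b : ℝ} (hb : 0 < b) :
    ∫ x in Set.Ioi (0:ℝ), x^m * Real.exp (-b * x^3) =
      b ^ (-((m:ℝ)+1)/3) * (1/3) * Real.Gamma (((m:ℝ)+1)/3) := by
  rw [← integral_rpow_mul_exp_neg_mul_rpow (by norm_num : (0:ℝ) < 3)
    (lt_of_lt_of_le neg_one_lt_zero (Nat.cast_nonneg m)) hb]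
  refine setIntegral_congr_fun measurableSet_Ioi (fun x hx => ?_)
  rw [Real.rpow_natCast, show (3:ℝ) = ((3:ℕ):ℝ) by norm_num, Real.rpow_natCast]

noncomputable def Gsum (η t r : ℝ) : ℝ :=
  Real.exp (η*t) * (3*t*(1+η))^2 * (r^4*Real.exp (-(η*t/2) * r^3))
  + Real.exp (η*t) * (2*(3*t*(1+η))*(η*t)) * (r^2*Real.exp (-(η*t/2) * r^3))
  + Real.exp (η*t) * (η*t)^2 * (r^0*Real.exp (-(η*t/2) * r^3))
  + Real.exp (η*t) * (6*t*(1+η)) * (r^1*Real.exp (-(η*t/2) * r^3))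

lemma Gb_eqOn (η t : ℝ) : Set.EqOn (Gb η t) (Gsum η t) (Set.Ioi 0) := by
  intro r hr
  rw [Gb, Gsum, abs_of_pos hr]
  ring

lemma Gsum_int (η t : ℝ) (hη : 0 < η) (ht : 0 < t) :
    IntegrableOn (Gsum η t) (Set.Ioi 0) := by
  have hb : 0 < η*t/2 := by positivity
  exact ((((moment_int 4 hb).const_mul _).add ((moment_int 2 hb).const_mul _)).add
    ((moment_int 0 hb).const_mul _)).add ((moment_int 1 hb).const_mul _)

lemma Gb_int_Ioi (η t : ℝ) (hη : 0 < η) (ht : 0 < t) :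
    IntegrableOn (Gb η t) (Set.Ioi 0) :=
  (Gsum_int η t hη ht).congr_fun (Gb_eqOn η t).symm measurableSet_Ioi

lemma Gsum_val (η t : ℝ) (hη : 0 < η) (ht : 0 < t) :
    ∫ r in Set.Ioi (0:ℝ), Gsum η t r =
      Real.exp (η*t) * (3*t*(1+η))^2 * ((η*t/2) ^ (-(5:ℝ)/3) * (1/3) * Real.Gamma (5/3))
      + Real.exp (η*t) * (2*(3*t*(1+η))*(η*t)) * ((η*t/2) ^ (-(1:ℝ)) * (1/3) * Real.Gamma 1)
      + Real.exp (η*t) * (η*t)^2 * ((η*t/2) ^ (-(1:ℝ)/3) * (1/3) * Real.Gamma (1/3))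
      + Real.exp (η*t) * (6*t*(1+η)) * ((η*t/2) ^ (-(2:ℝ)/3) * (1/3) * Real.Gamma (2/3)) := by
  have hb : 0 < η*t/2 := by positivity
  have i4 := (moment_int 4 hb).const_mul (Real.exp (η*t) * (3*t*(1+η))^2)
  have i2 := (moment_int 2 hb).const_mul (Real.exp (η*t) * (2*(3*t*(1+η))*(η*t)))
  have i0 := (moment_int 0 hb).const_mul (Real.exp (η*t) * (η*t)^2)
  have i1 := (moment_int 1 hb).const_mul (Real.exp (η*t) * (6*t*(1+η)))
  have i12 : IntegrableOn (fun r : ℝ =>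
      Real.exp (η*t) * (3*t*(1+η))^2 * (r^4*Real.exp (-(η*t/2) * r^3))
      + Real.exp (η*t) * (2*(3*t*(1+η))*(η*t)) * (r^2*Real.exp (-(η*t/2) * r^3)))
      (Set.Ioi 0) := i4.add i2
  have i123 : IntegrableOn (fun r : ℝ =>
      Real.exp (η*t) * (3*t*(1+η))^2 * (r^4*Real.exp (-(η*t/2) * r^3))
      + Real.exp (η*t) * (2*(3*t*(1+η))*(η*t)) * (r^2*Real.exp (-(η*t/2) * r^3))
      + Real.exp (η*t) * (η*t)^2 * (r^0*Real.exp (-(η*t/2) * r^3)))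
      (Set.Ioi 0) := i12.add i0
  simp only [Gsum]
  rw [integral_add i123 i1, integral_add i12 i0, integral_add i4 i2,
    integral_const_mul, integral_const_mul, integral_const_mul, integral_const_mul,
    moment_val 4 hb, moment_val 2 hb, moment_val 0 hb, moment_val 1 hb]
  norm_num

noncomputable def Cc : ℝ :=
  12*Real.Gamma (5/3) + 8*Real.Gamma 1 + (4/3)*Real.Gamma (1/3) + 8*Real.Gamma (2/3)

lemma Cc_pos : 0 < Cc := by
  have h1 : 0 < Real.Gamma (5/3) := Real.Gamma_pos_of_pos (by norm_num)
  have h2 : 0 < Real.Gamma 1 := Real.Gamma_pos_of_pos (by norm_num)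
  have h3 : 0 < Real.Gamma (1/3) := Real.Gamma_pos_of_pos (by norm_num)
  have h4 : 0 < Real.Gamma (2/3) := Real.Gamma_pos_of_pos (by norm_num)
  rw [Cc]; positivity

lemma Gb_integral_Ioi_le (η t : ℝ) (hη : 0 < η) (ht : 0 < t) :
    ∫ r in Set.Ioi (0:ℝ), Gb η t r ≤ Cc * (1/η+2)^2 * Real.exp (4*(η*t)) := by
  rw [setIntegral_congr_fun measurableSet_Ioi (Gb_eqOn η t), Gsum_val η t hη ht]
  have h4 := term4 hη ht
  have h2 := term2 hη ht
  have h0 := term0 hη ht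
  have h1 := term1 hη ht
  have : (12*Real.Gamma (5/3)) * (1/η+2)^2 * Real.exp (4*(η*t))
      + (8*Real.Gamma 1) * (1/η+2)^2 * Real.exp (4*(η*t))
      + ((4/3)*Real.Gamma (1/3)) * (1/η+2)^2 * Real.exp (4*(η*t))
      + (8*Real.Gamma (2/3)) * (1/η+2)^2 * Real.exp (4*(η*t))
      = Cc * (1/η+2)^2 * Real.exp (4*(η*t)) := by rw [Cc]; ring
  linarith

lemma Gb_even (η t x : ℝ) : Gb η t (-x) = Gb η t x := by
  simp [Gb, abs_neg, neg_sq]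

lemma Gb_int_Iio (η t : ℝ) (hη : 0 < η) (ht : 0 < t) :
    IntegrableOn (Gb η t) (Set.Iio 0) := by
  have A : MeasurableEmbedding (fun x : ℝ => -x) :=
    (Homeomorph.neg ℝ).isClosedEmbedding.measurableEmbedding
  have hmap : Measure.map (fun x : ℝ => -x) (volume.restrict (Set.Ioi (0:ℝ)))
      = volume.restrict (Set.Iio (0:ℝ)) := by
    rw [show Set.Ioi (0:ℝ) = (fun x : ℝ => -x) ⁻¹' (Set.Iio 0) by ext x; simp,
      ← Measure.restrict_map A.measurable measurableSet_Iio, Measure.map_neg_eq_self]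
  have h : Integrable (Gb η t)
      (Measure.map (fun x : ℝ => -x) (volume.restrict (Set.Ioi (0:ℝ)))) := by
    rw [A.integrable_map_iff]
    have he : (Gb η t) ∘ (fun x : ℝ => -x) = Gb η t := funext fun x => Gb_even η t x
    rw [he]
    exact Gb_int_Ioi η t hη ht
  rwa [hmap] at h

lemma Gb_reflect (η t : ℝ) :
    ∫ r in Set.Iio (0:ℝ), Gb η t r = ∫ r in Set.Ioi (0:ℝ), Gb η t r := by
  calc ∫ r in Set.Iio (0:ℝ), Gb η t r = ∫ r in Set.Iic (0:ℝ), Gb η t r :=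
        (integral_Iic_eq_integral_Iio).symm
    _ = ∫ r in Set.Iic (0:ℝ), Gb η t (-r) :=
        setIntegral_congr_fun measurableSet_Iic fun x _ => (Gb_even η t x).symm
    _ = ∫ r in Set.Ioi (-(0:ℝ)), Gb η t r := integral_comp_neg_Iic 0 (Gb η t)
    _ = ∫ r in Set.Ioi (0:ℝ), Gb η t r := by rw [neg_zero]

lemma normD_Iio (η t : ℝ) (hη : 0 < η) (ht : 0 < t) :
    (∫ ξ in Set.Iio (0:ℝ), ‖iteratedDeriv 2 (fun ξ : ℝ => ostSymbol η t ξ) ξ‖) ≤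
      Cc * (1/η+2)^2 * Real.exp (4*(η*t)) := by
  have h1 : (∫ ξ in Set.Iio (0:ℝ), ‖iteratedDeriv 2 (fun ξ : ℝ => ostSymbol η t ξ) ξ‖) ≤
      ∫ ξ in Set.Iio (0:ℝ), Gb η t ξ := by
    refine integral_mono_of_nonneg (Filter.Eventually.of_forall fun _ => norm_nonneg _)
      (Gb_int_Iio η t hη ht) ?_
    filter_upwards [ae_restrict_mem measurableSet_Iio] with ξ hξ
    exact pointwise_Iio η t hη ht hξ
  refine h1.trans ?_
  rw [Gb_reflect]
  exact Gb_integral_Ioi_le η t hη ht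

lemma normD_Ioi (η t : ℝ) (hη : 0 < η) (ht : 0 < t) :
    (∫ ξ in Set.Ioi (0:ℝ), ‖iteratedDeriv 2 (fun ξ : ℝ => ostSymbol η t ξ) ξ‖) ≤
      Cc * (1/η+2)^2 * Real.exp (4*(η*t)) := by
  have h1 : (∫ ξ in Set.Ioi (0:ℝ), ‖iteratedDeriv 2 (fun ξ : ℝ => ostSymbol η t ξ) ξ‖) ≤
      ∫ ξ in Set.Ioi (0:ℝ), Gb η t ξ := by
    refine integral_mono_of_nonneg (Filter.Eventually.of_forall fun _ => norm_nonneg _)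
      (Gb_int_Ioi η t hη ht) ?_
    filter_upwards [ae_restrict_mem measurableSet_Ioi] with ξ hξ
    exact pointwise_Ioi η t hη ht hξ
  exact h1.trans (Gb_integral_Ioi_le η t hη ht)

theorem stmt19 : ∃ c > (0:ℝ), ∀ η t : ℝ, 0 < η → 0 < t →
    (∀ x : ℝ,
      ‖(∫ ξ in Set.Iio (0:ℝ), Complex.exp (2 * Real.pi * Complex.I * ((x * ξ : ℝ) : ℂ)) *
            iteratedDeriv 2 (fun ξ : ℝ => ostSymbol η t ξ) ξ) +
        ∫ ξ in Set.Ioi (0:ℝ), Complex.exp (2 * Real.pi * Complex.I * ((x * ξ : ℝ) : ℂ)) *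
            iteratedDeriv 2 (fun ξ : ℝ => ostSymbol η t ξ) ξ‖ ≤
        c * (1/η + 2) ^ 2 * Real.exp (4 * η * t)) ∧
    (∫ ξ in Set.Iio (0:ℝ), ‖iteratedDeriv 2 (fun ξ : ℝ => ostSymbol η t ξ) ξ‖) ≤
      c * (1/η + 2) ^ 2 * Real.exp (4 * η * t) := by
  refine ⟨2*Cc + 1, by linarith [Cc_pos], fun η t hη ht => ?_⟩
  have hX : 0 < (1/η + 2)^2 * Real.exp (4*η*t) := by positivity
  have hassoc : (4:ℝ)*η*t = 4*(η*t) := by ring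
  have hIio := normD_Iio η t hη ht
  have hIoi := normD_Ioi η t hη ht
  rw [← hassoc] at hIio hIoi
  constructor
  · intro x
    have hnorm : ∀ S : Set ℝ,
        (∫ ξ in S, ‖Complex.exp (2 * Real.pi * Complex.I * ((x * ξ : ℝ) : ℂ)) *
          iteratedDeriv 2 (fun ξ : ℝ => ostSymbol η t ξ) ξ‖) =
        ∫ ξ in S, ‖iteratedDeriv 2 (fun ξ : ℝ => ostSymbol η t ξ) ξ‖ := by
      intro S
      refine integral_congr_ae (Filter.Eventually.of_forall fun ξ => ?_)
      beta_reduce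
      rw [norm_mul]
      have : ‖Complex.exp (2 * Real.pi * Complex.I * ((x * ξ : ℝ) : ℂ))‖ = 1 := by
        rw [Complex.norm_exp]
        have : (2 * (Real.pi:ℂ) * Complex.I * ((x * ξ : ℝ) : ℂ)).re = 0 := by
          simp [Complex.mul_re, Complex.mul_im, Complex.I_re, Complex.I_im,
            Complex.ofReal_re, Complex.ofReal_im]
        rw [this, Real.exp_zero]
      rw [this, one_mul]
    calc ‖(∫ ξ in Set.Iio (0:ℝ), Complex.exp (2 * Real.pi * Complex.I * ((x * ξ : ℝ) : ℂ)) *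
            iteratedDeriv 2 (fun ξ : ℝ => ostSymbol η t ξ) ξ) +
          ∫ ξ in Set.Ioi (0:ℝ), Complex.exp (2 * Real.pi * Complex.I * ((x * ξ : ℝ) : ℂ)) *
            iteratedDeriv 2 (fun ξ : ℝ => ostSymbol η t ξ) ξ‖
        ≤ ‖(∫ ξ in Set.Iio (0:ℝ), Complex.exp (2 * Real.pi * Complex.I * ((x * ξ : ℝ) : ℂ)) *
            iteratedDeriv 2 (fun ξ : ℝ => ostSymbol η t ξ) ξ)‖ +
          ‖∫ ξ in Set.Ioi (0:ℝ), Complex.exp (2 * Real.pi * Complex.I * ((x * ξ : ℝ) : ℂ)) *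
            iteratedDeriv 2 (fun ξ : ℝ => ostSymbol η t ξ) ξ‖ := norm_add_le _ _
      _ ≤ (∫ ξ in Set.Iio (0:ℝ), ‖Complex.exp (2 * Real.pi * Complex.I * ((x * ξ : ℝ) : ℂ)) *
            iteratedDeriv 2 (fun ξ : ℝ => ostSymbol η t ξ) ξ‖) +
          ∫ ξ in Set.Ioi (0:ℝ), ‖Complex.exp (2 * Real.pi * Complex.I * ((x * ξ : ℝ) : ℂ)) *
            iteratedDeriv 2 (fun ξ : ℝ => ostSymbol η t ξ) ξ‖ :=
          add_le_add (norm_integral_le_integral_norm _) (norm_integral_le_integral_norm _)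
      _ = (∫ ξ in Set.Iio (0:ℝ), ‖iteratedDeriv 2 (fun ξ : ℝ => ostSymbol η t ξ) ξ‖) +
          ∫ ξ in Set.Ioi (0:ℝ), ‖iteratedDeriv 2 (fun ξ : ℝ => ostSymbol η t ξ) ξ‖ := by
          rw [hnorm (Set.Iio 0), hnorm (Set.Ioi 0)]
      _ ≤ Cc * (1/η+2)^2 * Real.exp (4*η*t) + Cc * (1/η+2)^2 * Real.exp (4*η*t) :=
          add_le_add hIio hIoi
      _ ≤ (2*Cc + 1) * (1/η + 2)^2 * Real.exp (4*η*t) := by nlinarith [hX]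
  · refine hIio.trans ?_
    have : 0 < Cc := Cc_pos
    nlinarith [hX]
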